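/- Let H : ℝ → ℝ be continuously differentiable with λ1 ≤ H′(s) ≤ λ2 for all s ∈ ℝ, where 0 < λ1 ≤ λ2, and let V : ℝ² → ℝ be continuously differentiable. Define u(x,t) = V(Φ(x,t)). Then for every (x,t) ∈ ℝ²: λ1²·((∂V/∂ξ)² + (∂V/∂τ)²)(Φ(x,t)) ≤ (∂u/∂t)²(x,t) + (∂u/∂x)²(x,t) ≤ λ2²·((∂V/∂ξ)² + (∂V/∂τ)²)(Φ(x,t)). Consequently the energy densities of u and of V∘Φ are comparable with constants depending only on λ1 and λ2. -/

import Mathlib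

lemma lin2 (D : ℝ × ℝ →L[ℝ] ℝ) (c d : ℝ) :
    D (c, d) = c * D (1, 0) + d * D (0, 1) := by
  have h : (c, d) = c • ((1:ℝ), (0:ℝ)) + d • ((0:ℝ), (1:ℝ)) := by
    simp [Prod.ext_iff]
  rw [h, map_add, map_smul, map_smul, smul_eq_mul, smul_eq_mul]


/-- Partial derivative in the first variable of a function on `ℝ²`. -/
noncomputable def pdx (V : ℝ × ℝ → ℝ) (q : ℝ × ℝ) : ℝ :=
  deriv (fun s => V (s, q.2)) q.1

/-- Partial derivative in the second variable of a function on `ℝ²`. -/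
noncomputable def pdt (V : ℝ × ℝ → ℝ) (q : ℝ × ℝ) : ℝ :=
  deriv (fun s => V (q.1, s)) q.2

/-- The domain transformation `Φ(x,t) = ((H(x+t) - H(-x+t))/2, (H(x+t) + H(-x+t))/2)`. -/
noncomputable def Phi (H : ℝ → ℝ) (q : ℝ × ℝ) : ℝ × ℝ :=
  ((H (q.1 + q.2) - H (-q.1 + q.2)) / 2, (H (q.1 + q.2) + H (-q.1 + q.2)) / 2)

/-- if `0 < λ1 ≤ H' ≤ λ2` then for `u = V ∘ Φ`, the energy density of `u` is
comparable to that of `V ∘ Φ`: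
`λ1²·((V_ξ² + V_τ²) ∘ Φ) ≤ (∂u/∂t)² + (∂u/∂x)² ≤ λ2²·((V_ξ² + V_τ²) ∘ Φ)`. -/
theorem stmt9 (H : ℝ → ℝ) (hH : ContDiff ℝ 1 H) (lam1 lam2 : ℝ)
    (hlam1 : 0 < lam1) (hlam12 : lam1 ≤ lam2)
    (hHd : ∀ s : ℝ, lam1 ≤ deriv H s ∧ deriv H s ≤ lam2)
    (V : ℝ × ℝ → ℝ) (hV : ContDiff ℝ 1 V)
    (u : ℝ × ℝ → ℝ) (hu : ∀ q : ℝ × ℝ, u q = V (Phi H q)) :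
    ∀ x t : ℝ,
      lam1 ^ 2 * ((pdx V (Phi H (x, t))) ^ 2 + (pdt V (Phi H (x, t))) ^ 2) ≤
        (pdt u (x, t)) ^ 2 + (pdx u (x, t)) ^ 2 ∧
      (pdt u (x, t)) ^ 2 + (pdx u (x, t)) ^ 2 ≤
        lam2 ^ 2 * ((pdx V (Phi H (x, t))) ^ 2 + (pdt V (Phi H (x, t))) ^ 2) := by
  intro x t
  set Q := Phi H (x, t) with hQ
  set a := deriv H (x + t) with ha
  set b := deriv H (-x + t) with hb
  set D := fderiv ℝ V Q with hD
  have hVd : HasFDerivAt V D Q := (hV.differentiable one_ne_zero Q).hasFDerivAt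
  have hHa : HasDerivAt H a (x + t) := (hH.differentiable one_ne_zero (x + t)).hasDerivAt
  have hHb : HasDerivAt H b (-x + t) := (hH.differentiable one_ne_zero (-x + t)).hasDerivAt
  -- pdx V Q and pdt V Q in terms of D
  have hpdxV : pdx V Q = D (1, 0) := by
    have hl : HasDerivAt (fun s : ℝ => (s, Q.2)) ((1 : ℝ), (0 : ℝ)) Q.1 :=
      (hasDerivAt_id Q.1).prodMk (hasDerivAt_const _ _)
    have := hVd.comp_hasDerivAt Q.1 hl
    exact this.deriv
  have hpdtV : pdt V Q = D (0, 1) := by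
    have hl : HasDerivAt (fun s : ℝ => (Q.1, s)) ((0 : ℝ), (1 : ℝ)) Q.2 :=
      (hasDerivAt_const _ _).prodMk (hasDerivAt_id Q.2)
    have := hVd.comp_hasDerivAt Q.2 hl
    exact this.deriv
  -- derivative of Phi in x direction
  have h1x : HasDerivAt (fun s : ℝ => H (s + t)) a x := by
    have := hHa.comp x ((hasDerivAt_id x).add_const t)
    simpa [Function.comp_def] using this
  have h2x : HasDerivAt (fun s : ℝ => H (-s + t)) (-b) x := by
    have := hHb.comp x (((hasDerivAt_id x).neg).add_const t)
    simpa [Function.comp_def] using this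
  have hPhix : HasDerivAt (fun s : ℝ => Phi H (s, t)) (((a + b) / 2, (a - b) / 2)) x := by
    have hc1 : HasDerivAt (fun s : ℝ => (H (s + t) - H (-s + t)) / 2) ((a + b) / 2) x := by
      have := (h1x.sub h2x).div_const 2
      simpa [sub_neg_eq_add] using this
    have hc2 : HasDerivAt (fun s : ℝ => (H (s + t) + H (-s + t)) / 2) ((a - b) / 2) x := by
      have := (h1x.add h2x).div_const 2
      simpa [sub_eq_add_neg] using this
    exact hc1.prodMk hc2
  -- derivative of Phi in t direction
  have h1t : HasDerivAt (fun s : ℝ => H (x + s)) a t := by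
    have := hHa.comp t ((hasDerivAt_id t).const_add x)
    simpa [Function.comp_def] using this
  have h2t : HasDerivAt (fun s : ℝ => H (-x + s)) b t := by
    have := hHb.comp t ((hasDerivAt_id t).const_add (-x))
    simpa [Function.comp_def] using this
  have hPhit : HasDerivAt (fun s : ℝ => Phi H (x, s)) (((a - b) / 2, (a + b) / 2)) t := by
    exact ((h1t.sub h2t).div_const 2).prodMk ((h1t.add h2t).div_const 2)
  -- u partial derivatives
  have hux : pdx u (x, t) = D ((a + b) / 2, (a - b) / 2) := by
    have hcomp := hVd.comp_hasDerivAt x hPhix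
    have hfun : (fun s : ℝ => u (s, t)) = fun s : ℝ => V (Phi H (s, t)) :=
      funext fun s => hu (s, t)
    show deriv (fun s : ℝ => u (s, t)) x = _
    rw [hfun]
    exact hcomp.deriv
  have hut : pdt u (x, t) = D ((a - b) / 2, (a + b) / 2) := by
    have hcomp := hVd.comp_hasDerivAt t hPhit
    have hfun : (fun s : ℝ => u (x, s)) = fun s : ℝ => V (Phi H (x, s)) :=
      funext fun s => hu (x, s)
    show deriv (fun s : ℝ => u (x, s)) t = _
    rw [hfun]
    exact hcomp.deriv
  set p := D (1, 0) with hp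
  set q := D (0, 1) with hq'
  have hux' : pdx u (x, t) = (a + b) / 2 * p + (a - b) / 2 * q := by
    rw [hux, lin2]
  have hut' : pdt u (x, t) = (a - b) / 2 * p + (a + b) / 2 * q := by
    rw [hut, lin2]
  rw [hpdxV, hpdtV, hux', hut']
  obtain ⟨ha1, ha2⟩ := hHd (x + t)
  obtain ⟨hb1, hb2⟩ := hHd (-x + t)
  rw [← ha] at ha1 ha2
  rw [← hb] at hb1 hb2
  have hA1 : lam1 ^ 2 ≤ a ^ 2 := pow_le_pow_left₀ hlam1.le ha1 2
  have hA2 : a ^ 2 ≤ lam2 ^ 2 := pow_le_pow_left₀ (hlam1.le.trans ha1) ha2 2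
  have hB1 : lam1 ^ 2 ≤ b ^ 2 := pow_le_pow_left₀ hlam1.le hb1 2
  have hB2 : b ^ 2 ≤ lam2 ^ 2 := pow_le_pow_left₀ (hlam1.le.trans hb1) hb2 2
  have key : ((a - b) / 2 * p + (a + b) / 2 * q) ^ 2 + ((a + b) / 2 * p + (a - b) / 2 * q) ^ 2
      = (a ^ 2 * (p + q) ^ 2 + b ^ 2 * (p - q) ^ 2) / 2 := by ring
  have key1 : lam1 ^ 2 * (p ^ 2 + q ^ 2)
      = (lam1 ^ 2 * (p + q) ^ 2 + lam1 ^ 2 * (p - q) ^ 2) / 2 := by ring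
  have key2 : lam2 ^ 2 * (p ^ 2 + q ^ 2)
      = (lam2 ^ 2 * (p + q) ^ 2 + lam2 ^ 2 * (p - q) ^ 2) / 2 := by ring
  constructor
  · rw [key, key1]
    have h1 := mul_le_mul_of_nonneg_right hA1 (sq_nonneg (p + q))
    have h2 := mul_le_mul_of_nonneg_right hB1 (sq_nonneg (p - q))
    linarith
  · rw [key, key2]
    have h1 := mul_le_mul_of_nonneg_right hA2 (sq_nonneg (p + q))
    have h2 := mul_le_mul_of_nonneg_right hB2 (sq_nonneg (p - q))
    linarith
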